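/- A commutative ring R is called seminormal if whenever b, c ∈ R satisfy b³ = c², there exists a ∈ R with a² = b and a³ = c. Prove that for a field k, the ring k[x, y]/(xy) (coordinate ring of a node) is seminormal, while the ring k[t², t³] ⊂ k[t] (coordinate ring of a cusp) is not seminormal. -/

import Mathlib

/-- A commutative ring `R` is seminormal (Swan) if whenever `b, c ∈ R` satisfy
`b³ = c²`, there exists `a ∈ R` with `a² = b` and `a³ = c`. -/
def Seminormal (R : Type*) [CommRing R] : Prop :=
  ∀ b c : R, b ^ 3 = c ^ 2 → ∃ a : R, a ^ 2 = b ∧ a ^ 3 = c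

section Aux

open Polynomial in
lemma cusp_coeff_one (k : Type*) [Field k] (p : Polynomial k)
    (hp : p ∈ Algebra.adjoin k ({X ^ 2, X ^ 3} : Set (Polynomial k))) : p.coeff 1 = 0 := by
  induction hp using Algebra.adjoin_induction with
  | mem x hx =>
    rcases hx with h | h <;> subst h <;> simp [coeff_X_pow]
  | algebraMap r => simp [Polynomial.algebraMap_apply]
  | add x y _ _ hx hy => simp [hx, hy]
  | mul x y _ _ hx hy =>
    rw [Polynomial.coeff_mul]
    rw [Finset.Nat.antidiagonal_succ]
    simp [hx, hy]

open Polynomial in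
lemma cusp_not (k : Type*) [Field k] :
    ¬ (∀ b c : (Algebra.adjoin k ({Polynomial.X ^ 2, Polynomial.X ^ 3} : Set (Polynomial k))),
      b ^ 3 = c ^ 2 → ∃ a, a ^ 2 = b ∧ a ^ 3 = c) := by
  intro h
  set S := Algebra.adjoin k ({X ^ 2, X ^ 3} : Set (Polynomial k))
  have hb : (X : k[X]) ^ 2 ∈ S := Algebra.subset_adjoin (by simp)
  have hc : (X : k[X]) ^ 3 ∈ S := Algebra.subset_adjoin (by simp)
  obtain ⟨a, ha2, ha3⟩ := h ⟨X ^ 2, hb⟩ ⟨X ^ 3, hc⟩ (by ext; push_cast; ring_nf)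
  have h2 : (a : k[X]) ^ 2 = X ^ 2 := congrArg Subtype.val ha2
  have h3 : (a : k[X]) ^ 3 = X ^ 3 := congrArg Subtype.val ha3
  have key : ((a : k[X]) - X) * X ^ 2 = 0 := by
    have e : ((a : k[X]) - X) * X ^ 2 = (a : k[X]) * X ^ 2 - X ^ 3 := by ring
    rw [e, ← h2, show (a : k[X]) * (a : k[X]) ^ 2 = (a : k[X]) ^ 3 by ring, h3, sub_self]
  have hX : (a : k[X]) = X := by
    rcases mul_eq_zero.mp key with h' | h'
    · exact sub_eq_zero.mp h'
    · exact absurd h' (pow_ne_zero _ X_ne_zero)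
  have hmem : (X : k[X]) ∈ S := hX ▸ a.2
  have := cusp_coeff_one k X hmem
  simp at this

open MvPolynomial
open MvPolynomial

noncomputable def phi (k : Type*) [CommSemiring k] :
    MvPolynomial (Fin 2) k →ₐ[k] Polynomial k := aeval ![Polynomial.X, 0]

noncomputable def psi (k : Type*) [CommSemiring k] :
    MvPolynomial (Fin 2) k →ₐ[k] Polynomial k := aeval ![0, Polynomial.X]

lemma fin2_single0 (m : Fin 2 →₀ ℕ) (h : m 1 = 0) : m = Finsupp.single 0 (m 0) := by
  ext i
  fin_cases i <;> simp [h, Finsupp.single_apply]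

lemma fin2_single1 (m : Fin 2 →₀ ℕ) (h : m 0 = 0) : m = Finsupp.single 1 (m 1) := by
  ext i
  fin_cases i <;> simp [h, Finsupp.single_apply]

lemma phi_coeff {k : Type*} [CommRing k] (p : MvPolynomial (Fin 2) k) (n : ℕ) :
    (phi k p).coeff n = coeff (Finsupp.single 0 n) p := by
  induction p using MvPolynomial.induction_on' with
  | monomial m a =>
    rw [phi, aeval_monomial, Finsupp.prod_fintype _ _ (fun i => pow_zero _), Fin.prod_univ_two]
    simp only [Matrix.cons_val_zero, Matrix.cons_val_one, Matrix.head_cons]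
    by_cases h1 : m 1 = 0
    · rw [h1, pow_zero, mul_one, coeff_monomial]
      rw [show (algebraMap k (Polynomial k)) a = Polynomial.C a from rfl]
      rw [Polynomial.coeff_C_mul, Polynomial.coeff_X_pow]
      by_cases he : Finsupp.single 0 n = m
      · have : m 0 = n := by rw [← he]; simp
        simp [this, he]
      · have : ¬ (m 0 = n) := by
          intro hc
          exact he (by rw [← hc]; exact (fin2_single0 m h1).symm)
        rw [if_neg (fun h => this h.symm), if_neg (fun h => he h.symm), mul_zero]
    · rw [zero_pow h1, mul_zero, mul_zero, Polynomial.coeff_zero, coeff_monomial]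
      have : ¬ (Finsupp.single 0 n = m) := by
        intro hc
        apply h1
        rw [← hc]
        simp [Finsupp.single_apply]
      rw [if_neg (fun h => this h.symm)]
  | add p q hp hq =>
    rw [map_add, Polynomial.coeff_add, coeff_add, hp, hq]

lemma psi_coeff {k : Type*} [CommRing k] (p : MvPolynomial (Fin 2) k) (n : ℕ) :
    (psi k p).coeff n = coeff (Finsupp.single 1 n) p := by
  induction p using MvPolynomial.induction_on' with
  | monomial m a =>
    rw [psi, aeval_monomial, Finsupp.prod_fintype _ _ (fun i => pow_zero _), Fin.prod_univ_two]
    simp only [Matrix.cons_val_zero, Matrix.cons_val_one, Matrix.head_cons]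
    by_cases h0 : m 0 = 0
    · rw [h0, pow_zero, one_mul, coeff_monomial]
      rw [show (algebraMap k (Polynomial k)) a = Polynomial.C a from rfl]
      rw [Polynomial.coeff_C_mul, Polynomial.coeff_X_pow]
      by_cases he : Finsupp.single 1 n = m
      · have : m 1 = n := by rw [← he]; simp
        simp [this, he]
      · have : ¬ (m 1 = n) := by
          intro hc
          exact he (by rw [← hc]; exact (fin2_single1 m h0).symm)
        rw [if_neg (fun h => this h.symm), if_neg (fun h => he h.symm), mul_zero]
    · rw [zero_pow h0, zero_mul, mul_zero, Polynomial.coeff_zero, coeff_monomial]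
      have : ¬ (Finsupp.single 1 n = m) := by
        intro hc
        apply h0
        rw [← hc]
        simp [Finsupp.single_apply]
      rw [if_neg (fun h => this h.symm)]
  | add p q hp hq =>
    rw [map_add, Polynomial.coeff_add, coeff_add, hp, hq]

lemma mem_span_of {k : Type*} [CommRing k] (p : MvPolynomial (Fin 2) k)
    (h0 : phi k p = 0) (h1 : psi k p = 0) :
    p ∈ Ideal.span {(X 0 : MvPolynomial (Fin 2) k) * X 1} := by
  rw [Ideal.mem_span_singleton]
  have hXX : (X 0 : MvPolynomial (Fin 2) k) * X 1 =
      monomial (Finsupp.single 0 1 + Finsupp.single 1 1) 1 := by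
    rw [X, X, monomial_mul, one_mul]
  rw [hXX, monomial_one_dvd_iff_modMonomial_eq_zero]
  apply MvPolynomial.ext
  intro s
  rw [coeff_zero]
  by_cases hle : Finsupp.single 0 1 + Finsupp.single 1 1 ≤ s
  · rw [coeff_modMonomial_of_le _ hle]
  · rw [coeff_modMonomial_of_not_le _ hle]
    by_cases hs0 : s 0 = 0
    · rw [fin2_single1 s hs0, ← psi_coeff, h1, Polynomial.coeff_zero]
    · by_cases hs1 : s 1 = 0
      · rw [fin2_single0 s hs1, ← phi_coeff, h0, Polynomial.coeff_zero]
      · exfalso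
        apply hle
        intro i
        fin_cases i <;> simp [Finsupp.single_apply] <;> omega

lemma domain_sqcube_eq {R : Type*} [CommRing R] [IsDomain R] {α β : R}
    (h2 : α ^ 2 = β ^ 2) (h3 : α ^ 3 = β ^ 3) : α = β := by
  by_cases hα : α = 0
  · subst hα
    have hb : β ^ 2 = 0 := by rw [← h2]; ring
    exact ((pow_eq_zero_iff two_ne_zero).mp hb).symm
  · have key : (α - β) * α ^ 2 = 0 := by
      have : α * α ^ 2 - β * β ^ 2 = 0 := by
        rw [show α * α ^ 2 = α ^ 3 by ring, show β * β ^ 2 = β ^ 3 by ring, h3, sub_self]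
      calc (α - β) * α ^ 2 = α * α ^ 2 - β * α ^ 2 := by ring
        _ = α * α ^ 2 - β * β ^ 2 := by rw [h2]
        _ = 0 := this
    rcases mul_eq_zero.mp key with h | h
    · exact sub_eq_zero.mp h
    · exact absurd h (pow_ne_zero _ hα)

lemma poly_seminormal (k : Type*) [Field k] (f g : Polynomial k) (h : f ^ 3 = g ^ 2) :
    ∃ a : Polynomial k, a ^ 2 = f ∧ a ^ 3 = g := by
  by_cases hf : f = 0
  · subst hf
    have hg : g = 0 := by
      have : g ^ 2 = 0 := by rw [← h]; ring
      exact pow_eq_zero_iff two_ne_zero |>.mp this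
    exact ⟨0, by simp, by simp [hg]⟩
  · have hg : g ≠ 0 := by
      intro hg; apply hf
      have : f ^ 3 = 0 := by rw [h, hg]; ring
      exact pow_eq_zero_iff three_ne_zero |>.mp this
    set K := FractionRing (Polynomial k)
    set i := algebraMap (Polynomial k) K with hi
    have hinj : Function.Injective i := IsFractionRing.injective _ _
    have hif : i f ≠ 0 := fun hz => hf (hinj (by simpa using hz))
    have hig : i g ≠ 0 := fun hz => hg (hinj (by simpa using hz))
    set u : K := i g / i f with hu
    have hpow : (i f) ^ 3 = (i g) ^ 2 := by rw [← map_pow, ← map_pow, h]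
    have hu2 : u ^ 2 = i f := by
      rw [hu, div_pow]
      rw [← hpow]
      rw [div_eq_iff (pow_ne_zero _ hif)]
      ring
    have hu3 : u ^ 3 = i g := by
      rw [hu, div_pow]
      rw [eq_comm, eq_div_iff (pow_ne_zero _ hif), hpow]
      ring
    have hint : IsIntegral (Polynomial k) u := by
      refine ⟨Polynomial.X ^ 2 - Polynomial.C f, ?_, ?_⟩
      · exact Polynomial.monic_X_pow_sub_C f two_ne_zero
      · simp [Polynomial.eval₂_sub, hu2, hi]
    obtain ⟨a, ha⟩ := IsIntegrallyClosed.isIntegral_iff.mp hint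
    refine ⟨a, hinj ?_, hinj ?_⟩
    · rw [map_pow, ha, hu2]
    · rw [map_pow, ha, hu3]

lemma node_semi (k : Type*) [Field k] :
    ∀ b c : (MvPolynomial (Fin 2) k ⧸
      Ideal.span {(MvPolynomial.X 0 : MvPolynomial (Fin 2) k) * MvPolynomial.X 1}),
      b ^ 3 = c ^ 2 → ∃ a, a ^ 2 = b ∧ a ^ 3 = c := by
  intro b c hbc
  obtain ⟨p, rfl⟩ := Ideal.Quotient.mk_surjective b
  obtain ⟨q, rfl⟩ := Ideal.Quotient.mk_surjective c
  set I : Ideal (MvPolynomial (Fin 2) k) :=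
    Ideal.span {(MvPolynomial.X 0 : MvPolynomial (Fin 2) k) * MvPolynomial.X 1} with hI
  have hphiI : ∀ r ∈ I, phi k r = 0 := by
    intro r hr
    rw [hI, Ideal.mem_span_singleton] at hr
    obtain ⟨t, rfl⟩ := hr
    rw [map_mul, map_mul]
    have : phi k (X 1) = 0 := by simp [phi]
    rw [this]
    ring
  have hpsiI : ∀ r ∈ I, psi k r = 0 := by
    intro r hr
    rw [hI, Ideal.mem_span_singleton] at hr
    obtain ⟨t, rfl⟩ := hr
    rw [map_mul, map_mul]
    have : psi k (X 0) = 0 := by simp [psi]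
    rw [this]
    ring
  have hpq : p ^ 3 - q ^ 2 ∈ I := by
    rw [← Ideal.Quotient.eq, map_pow, map_pow]
    exact hbc
  have h1 : (phi k p) ^ 3 = (phi k q) ^ 2 := by
    have := hphiI _ hpq
    rw [map_sub, map_pow, map_pow, sub_eq_zero] at this
    exact this
  have h2 : (psi k p) ^ 3 = (psi k q) ^ 2 := by
    have := hpsiI _ hpq
    rw [map_sub, map_pow, map_pow, sub_eq_zero] at this
    exact this
  obtain ⟨a1, ha12, ha13⟩ := poly_seminormal k _ _ h1
  obtain ⟨a2, ha22, ha23⟩ := poly_seminormal k _ _ h2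
  set α := Polynomial.constantCoeff a1 with hα
  set β := Polynomial.constantCoeff a2 with hβ
  have hconst : ∀ r : MvPolynomial (Fin 2) k,
      Polynomial.constantCoeff (phi k r) = Polynomial.constantCoeff (psi k r) := by
    intro r
    rw [Polynomial.constantCoeff_apply, Polynomial.constantCoeff_apply, phi_coeff, psi_coeff]
    congr 1
    simp
  have hαβ : α = β := by
    apply domain_sqcube_eq (R := k)
    · rw [hα, hβ, ← map_pow, ← map_pow, ha12, ha22, hconst]
    · rw [hα, hβ, ← map_pow, ← map_pow, ha13, ha23, hconst]
  set A : MvPolynomial (Fin 2) k :=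
    Polynomial.aeval (X 0 : MvPolynomial (Fin 2) k) a1 +
      Polynomial.aeval (X 1 : MvPolynomial (Fin 2) k) a2 - MvPolynomial.C α with hA
  have haevalzero : ∀ a : Polynomial k,
      Polynomial.aeval (0 : Polynomial k) a =
        Polynomial.C (Polynomial.constantCoeff a) := by
    intro a
    rw [Polynomial.constantCoeff_apply, Polynomial.aeval_def, Polynomial.eval₂_at_zero]
    rfl
  have hphiA : phi k A = a1 := by
    have e0 : phi k (X 0) = Polynomial.X := by simp [phi]
    have e1 : phi k (X 1) = 0 := by simp [phi]
    have eC : phi k (MvPolynomial.C α) = Polynomial.C α := by simp [phi]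
    rw [hA, map_sub, map_add, ← Polynomial.aeval_algHom_apply, ← Polynomial.aeval_algHom_apply,
      e0, e1, Polynomial.aeval_X_left_apply, haevalzero a2, eC, ← hβ, ← hαβ, add_sub_cancel_right]
  have hpsiA : psi k A = a2 := by
    have e0 : psi k (X 0) = 0 := by simp [psi]
    have e1 : psi k (X 1) = Polynomial.X := by simp [psi]
    have eC : psi k (MvPolynomial.C α) = Polynomial.C α := by simp [psi]
    rw [hA, map_sub, map_add, ← Polynomial.aeval_algHom_apply, ← Polynomial.aeval_algHom_apply,
      e0, e1, Polynomial.aeval_X_left_apply, haevalzero a1, eC, ← hα, add_sub_cancel_left]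
  refine ⟨Ideal.Quotient.mk I A, ?_, ?_⟩
  · rw [← map_pow, Ideal.Quotient.eq]
    apply mem_span_of
    · rw [map_sub, map_pow, hphiA, ha12, sub_self]
    · rw [map_sub, map_pow, hpsiA, ha22, sub_self]
  · rw [← map_pow, Ideal.Quotient.eq]
    apply mem_span_of
    · rw [map_sub, map_pow, hphiA, ha13, sub_self]
    · rw [map_sub, map_pow, hpsiA, ha23, sub_self]

end Aux

/-- for a field `k`, the coordinate ring `k[x, y]/(xy)` of a
node is seminormal, while the coordinate ring `k[t², t³] ⊆ k[t]` of a cusp is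
not seminormal. -/
theorem node_seminormal_and_cusp_not_seminormal (k : Type*) [Field k] :
    Seminormal (MvPolynomial (Fin 2) k ⧸
      Ideal.span {(MvPolynomial.X 0 : MvPolynomial (Fin 2) k) *
        MvPolynomial.X 1}) ∧
    ¬ Seminormal (Algebra.adjoin k
      ({Polynomial.X ^ 2, Polynomial.X ^ 3} : Set (Polynomial k))) := by
  exact ⟨node_semi k, cusp_not k⟩
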